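/- Let C : ℝ → ℝ be continuously differentiable with C(t) > 0 and suppose there exists t* with C'(t*) < 0. Then for every ε > 0 there exist t₁ < t₂ with t₂ − t₁ < ε and a continuously differentiable Q : [t₁, t₂] → ℝ with Q(t₁) = Q(t₂) = 0 such that ∫_{t₁}^{t₂} (Q(t)/C(t))·Q'(t) dt < 0. -/

import Mathlib

theorem stmt_12 (C : ℝ → ℝ) (hC : ContDiff ℝ 1 C) (hCpos : ∀ t, 0 < C t)
    (tstar : ℝ) (hneg : deriv C tstar < 0) :
    ∀ ε > (0:ℝ), ∃ t₁ t₂ : ℝ, t₁ < t₂ ∧ t₂ - t₁ < ε ∧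
      ∃ Q : ℝ → ℝ, ContDiff ℝ 1 Q ∧ Q t₁ = 0 ∧ Q t₂ = 0 ∧
        (∫ t in t₁..t₂, (Q t / C t) * deriv Q t) < 0 := by
  intro ε hε
  have hCdiff : Differentiable ℝ C := hC.differentiable one_ne_zero
  have hC' : Continuous (deriv C) := hC.continuous_deriv le_rfl
  -- find δ with deriv C < 0 on ball tstar δ
  have hopen : IsOpen {t : ℝ | deriv C t < 0} := isOpen_lt hC' continuous_const
  obtain ⟨δ, hδpos, hball⟩ := Metric.isOpen_iff.mp hopen tstar hneg
  set r : ℝ := min (δ / 2) (ε / 3) with hr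
  have hrpos : 0 < r := lt_min (by linarith) (by linarith)
  set t₁ : ℝ := tstar - r with ht1
  set t₂ : ℝ := tstar + r with ht2
  have h12 : t₁ < t₂ := by simp [ht1, ht2]; linarith
  have hsub : ∀ t, t ∈ Set.Icc t₁ t₂ → deriv C t < 0 := by
    intro t ht
    apply hball
    simp only [Metric.mem_ball, Real.dist_eq]
    have h1 := ht.1; have h2 := ht.2
    have : r < δ := lt_of_le_of_lt (min_le_left _ _) (by linarith)
    rw [abs_lt]; constructor <;> [skip; skip] <;> simp [ht1, ht2] at h1 h2 ⊢ <;> linarith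
  refine ⟨t₁, t₂, h12, by
    have : r ≤ ε / 3 := min_le_right _ _
    simp [ht1, ht2]; linarith, ?_⟩
  set Q : ℝ → ℝ := fun t => (t - t₁) * (t₂ - t) with hQdef
  set Qd : ℝ → ℝ := fun t => (t₂ - t) - (t - t₁) with hQd
  have hQderiv : ∀ t, HasDerivAt Q (Qd t) t := by
    intro t
    have h : HasDerivAt (fun t : ℝ => (t - t₁) * (t₂ - t))
        (1 * (t₂ - t) + (t - t₁) * (0 - 1)) t :=
      ((hasDerivAt_id t).sub_const t₁).mul ((hasDerivAt_const t t₂).sub (hasDerivAt_id t))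
    convert h using 1; simp [hQd]; ring
  have hQeq : ∀ t, deriv Q t = Qd t := fun t => (hQderiv t).deriv
  have hQcd : ContDiff ℝ 1 Q :=
    (contDiff_id.sub contDiff_const).mul (contDiff_const.sub contDiff_id)
  have hQ1 : Q t₁ = 0 := by simp [hQdef]
  have hQ2 : Q t₂ = 0 := by simp [hQdef]
  refine ⟨Q, hQcd, hQ1, hQ2, ?_⟩
  -- integration by parts setup
  set F : ℝ → ℝ := fun t => Q t ^ 2 / (2 * C t) with hF
  set F' : ℝ → ℝ := fun t =>
    (2 * Q t ^ 1 * Qd t * (2 * C t) - Q t ^ 2 * (2 * deriv C t)) / (2 * C t) ^ 2 with hF'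
  set hfun : ℝ → ℝ := fun t => Q t ^ 2 * deriv C t / (2 * C t ^ 2) with hhfun
  have hFderiv : ∀ t, HasDerivAt F (F' t) t := by
    intro t
    have hN : HasDerivAt (fun t => Q t ^ 2) ((2 : ℕ) * Q t ^ 1 * Qd t) t :=
      (hQderiv t).pow 2
    have hD : HasDerivAt (fun t => 2 * C t) (2 * deriv C t) t :=
      ((hCdiff t).hasDerivAt).const_mul 2
    have hne : 2 * C t ≠ 0 := by have := hCpos t; positivity
    have := hN.div hD hne
    exact this.congr_deriv (by simp [hF'])
  have hid : ∀ t, (Q t / C t) * deriv Q t = F' t + hfun t := by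
    intro t
    have hc := (hCpos t).ne'
    rw [hQeq t]
    simp only [hF', hhfun]
    field_simp
    ring
  have hcont1 : Continuous F' := by
    apply Continuous.div
    · fun_prop
    · fun_prop
    · intro t; have := hCpos t; positivity
  have hcont2 : Continuous hfun := by
    apply Continuous.div
    · fun_prop
    · fun_prop
    · intro t; have := hCpos t; positivity
  have hint1 : IntervalIntegrable F' MeasureTheory.volume t₁ t₂ :=
    hcont1.intervalIntegrable _ _
  have hint2 : IntervalIntegrable hfun MeasureTheory.volume t₁ t₂ :=
    hcont2.intervalIntegrable _ _
  have hsplit : (∫ t in t₁..t₂, (Q t / C t) * deriv Q t)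
      = (∫ t in t₁..t₂, F' t) + ∫ t in t₁..t₂, hfun t := by
    rw [← intervalIntegral.integral_add hint1 hint2]
    apply intervalIntegral.integral_congr
    intro t _
    exact hid t
  have hFTC : (∫ t in t₁..t₂, F' t) = F t₂ - F t₁ :=
    intervalIntegral.integral_eq_sub_of_hasDerivAt (fun t _ => hFderiv t) hint1
  have hF0 : F t₂ - F t₁ = 0 := by simp [hF, hQ1, hQ2]
  have hneg2 : (∫ t in t₁..t₂, hfun t) < 0 := by
    have : 0 < ∫ t in t₁..t₂, -hfun t := by
      apply intervalIntegral.intervalIntegral_pos_of_pos_on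
      · exact hint2.neg
      · intro x hx
        have hQpos : 0 < Q x := by
          have := hx.1; have := hx.2
          apply mul_pos <;> simp [hQdef] <;> linarith
        have hdC : deriv C x < 0 := hsub x ⟨le_of_lt hx.1, le_of_lt hx.2⟩
        have hnum : Q x ^ 2 * deriv C x < 0 :=
          mul_neg_of_pos_of_neg (pow_pos hQpos 2) hdC
        have hden : 0 < 2 * C x ^ 2 := by have := hCpos x; positivity
        simp only [hhfun]
        linarith [div_neg_of_neg_of_pos hnum hden]
      · exact h12
    rw [intervalIntegral.integral_neg] at this
    linarith
  rw [hsplit, hFTC, hF0]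
  linarith
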